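/- Let R be a commutative ring and I ⊆ R an ideal with I² = 0. Let J be an ideal of the polynomial ring R[x₁, …, x_d] such that every element of J has all its coefficients in I and zero constant coefficient. Set A = R[x₁, …, x_d]/J and let aᵢ denote the image of xᵢ in A. Then: (i) for every (b₁, …, b_d) ∈ I^d there is a well-defined R-algebra homomorphism Ψ_{(b₁,…,b_d)} : A → R with Ψ_{(b₁,…,b_d)}(aᵢ) = bᵢ for all i; and (ii) the map (b₁, …, b_d) ↦ Ψ_{(b₁,…,b_d)} is a bijection from I^d onto the set of R-algebra homomorphisms φ : A → R satisfying φ(aᵢ) ∈ I for all i. -/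
import Mathlib

theorem aeval_eq_zero_of_memJ
    {R : Type*} [CommRing R] {I : Ideal R} (hI : I ^ 2 = ⊥)
    {d : ℕ} {J : Ideal (MvPolynomial (Fin d) R)}
    (hJ : ∀ p ∈ J, (∀ m, MvPolynomial.coeff m p ∈ I) ∧ MvPolynomial.coeff 0 p = 0)
    (b : Fin d → R) (hb : ∀ i, b i ∈ I) :
    ∀ p ∈ J, MvPolynomial.aeval b p = 0 := by
  have hmul : ∀ x ∈ I, ∀ y ∈ I, x * y = 0 := by
    intro x hx y hy
    have := Ideal.mul_mem_mul hx hy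
    rw [← pow_two, hI] at this
    simpa using this
  intro p hp
  rw [MvPolynomial.aeval_def, MvPolynomial.eval₂_eq]
  apply Finset.sum_eq_zero
  intro m _
  by_cases h0 : m = 0
  · subst h0
    simp [(hJ p hp).2]
  · obtain ⟨i, hi⟩ : ∃ i, m i ≠ 0 := by
      by_contra h
      push_neg at h
      exact h0 (Finsupp.ext h)
    have hprod : (∏ j ∈ m.support, b j ^ m j) ∈ I := by
      have hpow : b i ^ m i ∈ I := by
        have heq : b i ^ m i = b i * b i ^ (m i - 1) := by
          rw [← pow_succ']; congr 1; omega
        rw [heq]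
        exact Ideal.mul_mem_right _ _ (hb i)
      have hmem : i ∈ m.support := Finsupp.mem_support_iff.mpr hi
      rw [← Finset.mul_prod_erase _ _ hmem]
      exact Ideal.mul_mem_right _ _ hpow
    have hc : (algebraMap R R) (MvPolynomial.coeff m p) ∈ I := by
      simpa using (hJ p hp).1 m
    exact hmul _ hc _ hprod

theorem alg_homs_to_R_of_sq_zero_relations
    (R : Type*) [CommRing R] (I : Ideal R) (hI : I ^ 2 = ⊥)
    (d : ℕ) (J : Ideal (MvPolynomial (Fin d) R))
    (hJ : ∀ p ∈ J, (∀ m, MvPolynomial.coeff m p ∈ I) ∧ MvPolynomial.coeff 0 p = 0) :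
    ∃ Ψ : {b : Fin d → R // ∀ i, b i ∈ I} →
        ((MvPolynomial (Fin d) R ⧸ J) →ₐ[R] R),
      (∀ b i, Ψ b (Ideal.Quotient.mk J (MvPolynomial.X i)) = b.1 i) ∧
      Function.Injective Ψ ∧
      Set.range Ψ = {φ : (MvPolynomial (Fin d) R ⧸ J) →ₐ[R] R |
        ∀ i, φ (Ideal.Quotient.mk J (MvPolynomial.X i)) ∈ I} := by
  refine ⟨fun b => Ideal.Quotient.liftₐ J (MvPolynomial.aeval b.1)
      (aeval_eq_zero_of_memJ hI hJ b.1 b.2), ?_, ?_, ?_⟩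
  · intro b i
    simp
  · intro b c h
    apply Subtype.ext
    funext i
    have := congrArg (fun ψ => ψ (Ideal.Quotient.mk J (MvPolynomial.X i))) h
    simpa using this
  · ext φ
    constructor
    · rintro ⟨b, rfl⟩ i
      simpa using b.2 i
    · intro hφ
      refine ⟨⟨fun i => φ (Ideal.Quotient.mk J (MvPolynomial.X i)), hφ⟩, ?_⟩
      have key : (Ideal.Quotient.liftₐ J (MvPolynomial.aeval
            (fun i => φ (Ideal.Quotient.mk J (MvPolynomial.X i))))
            (aeval_eq_zero_of_memJ hI hJ _ hφ)).comp (Ideal.Quotient.mkₐ R J)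
          = φ.comp (Ideal.Quotient.mkₐ R J) := by
        apply MvPolynomial.algHom_ext
        intro i
        simp
      ext x
      obtain ⟨p, rfl⟩ := Ideal.Quotient.mk_surjective x
      exact (congrArg (fun ψ => ψ p) key)
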